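/- arXiv:0805.2981 — 2 statements merged into one kernel-verified Lean document; each statement's English description precedes it below -/
import Mathlib

section
/- Let K be a field and L a finite-dimensional Lie algebra over K with basis X_1, …, X_n and structure constants C_{ij}^k, such that span(X_1, …, X_s) is a Lie subalgebra S and M := span(X_{s+1}, …, X_n) satisfies [S, M] ⊆ M; let C'_{ij}^k be the structure constants of the associated Inönü–Wigner contraction g. Let F ∈ K[x_1, …, x_n] be a homogeneous polynomial of degree p with D_iF = 0 for all 1 ≤ i ≤ n (a Casimir invariant of L), and let M* be the largest b such that the bihomogeneous component F_{(p−b,b)} of F is nonzero. Then the top component F_{(p−M*,M*)} is an invariant of the contraction: D'_iF_{(p−M*,M*)} = 0 for all 1 ≤ i ≤ n. -/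
/-- The coadjoint vector field `D_i = Σ_{j,k} C_{ij}^k x_k ∂/∂x_j` associated with the
structure constants `C`, acting on the polynomial ring `K[x_1, …, x_n]`. -/
noncomputable def coadD {K : Type*} [Field K] {n : ℕ}
    (C : Fin n → Fin n → Fin n → K) (i : Fin n) :
    MvPolynomial (Fin n) K → MvPolynomial (Fin n) K :=
  fun F => ∑ j, ∑ k, C i j k • (MvPolynomial.X k * MvPolynomial.pderiv j F)

/-- Degree of a monomial exponent in the subalgebra variables `x_1, …, x_s`. -/
def degS {n : ℕ} (s : ℕ) (d : Fin n →₀ ℕ) : ℕ :=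
  ∑ i ∈ Finset.univ.filter (fun i : Fin n => (i : ℕ) < s), d i

/-- Degree of a monomial exponent in the complementary variables `x_{s+1}, …, x_n`. -/
def degM {n : ℕ} (s : ℕ) (d : Fin n →₀ ℕ) : ℕ :=
  ∑ i ∈ Finset.univ.filter (fun i : Fin n => s ≤ (i : ℕ)), d i

/-- The bihomogeneous component of bidegree `(a, b)` of a polynomial `F`. -/
noncomputable def bihomComp {K : Type*} [Field K] {n : ℕ} (s a b : ℕ)
    (F : MvPolynomial (Fin n) K) : MvPolynomial (Fin n) K :=
  ∑ d ∈ F.support.filter (fun d => degS s d = a ∧ degM s d = b),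
    MvPolynomial.monomial d (F.coeff d)

/- ### Auxiliary lemmas -/

lemma degM_add {n : ℕ} (s : ℕ) (d e : Fin n →₀ ℕ) :
    degM s (d + e) = degM s d + degM s e := by
  simp [degM, Finset.sum_add_distrib]

lemma degM_single {n : ℕ} (s : ℕ) (j : Fin n) :
    degM s (Finsupp.single j 1) = if s ≤ (j : ℕ) then 1 else 0 := by
  unfold degM
  rw [Finset.sum_congr rfl (fun i _ => Finsupp.single_apply (a := j) (b := 1) (a' := i)),
    Finset.sum_ite_eq]
  simp

lemma degS_add_degM {n s : ℕ} (d : Fin n →₀ ℕ) :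
    degS s d + degM s d = Finsupp.weight 1 d := by
  have h1 : (Finsupp.weight 1 d : ℕ) = ∑ i : Fin n, d i := by
    rw [Finsupp.weight_apply, Finsupp.sum,
      Finset.sum_subset (Finset.subset_univ d.support)]
    · simp
    · intro x _ hx
      simp [Finsupp.notMem_support_iff.mp hx]
  rw [h1]
  unfold degS degM
  rw [← Finset.sum_filter_add_sum_filter_not Finset.univ (fun i : Fin n => (i : ℕ) < s)]
  congr 1
  apply Finset.sum_congr _ (fun _ _ => rfl)
  ext i
  simp [not_lt]

open MvPolynomial in
lemma support_pderiv_aux {K : Type*} [Field K] {n : ℕ} (j : Fin n)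
    (P : MvPolynomial (Fin n) K) (d : Fin n →₀ ℕ)
    (hd : d ∈ (pderiv j P).support) :
    ∃ e ∈ P.support, 0 < e j ∧ d + Finsupp.single j 1 = e := by
  classical
  have hP : (∑ v ∈ P.support, monomial v (coeff v P)) = P := support_sum_monomial_coeff P
  rw [← hP, map_sum] at hd
  obtain ⟨e, he, hde⟩ := Finset.mem_biUnion.mp (MvPolynomial.support_sum hd)
  rw [pderiv_monomial] at hde
  have hsingle := support_monomial_subset hde
  rw [Finset.mem_singleton] at hsingle
  subst hsingle
  have hne : coeff e P * e j ≠ 0 := by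
    intro h0
    rw [h0] at hde
    simp at hde
  have hej : 0 < e j := by
    rcases Nat.eq_zero_or_pos (e j) with h | h
    · exact absurd (by rw [h]; simp) hne
    · exact h
  refine ⟨e, he, hej, ?_⟩
  exact tsub_add_cancel_of_le (Finsupp.single_le_iff.mpr hej)

open MvPolynomial in
lemma support_coadD {K : Type*} [Field K] {n : ℕ}
    (Cc : Fin n → Fin n → Fin n → K) (i : Fin n) (P : MvPolynomial (Fin n) K)
    (d : Fin n →₀ ℕ) (hd : d ∈ (coadD Cc i P).support) :
    ∃ j k, Cc i j k ≠ 0 ∧ ∃ e ∈ P.support, 0 < e j ∧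
      d + Finsupp.single j 1 = Finsupp.single k 1 + e := by
  classical
  unfold coadD at hd
  obtain ⟨j, hj, hd⟩ := Finset.mem_biUnion.mp (MvPolynomial.support_sum hd)
  obtain ⟨k, hk, hd⟩ := Finset.mem_biUnion.mp (MvPolynomial.support_sum hd)
  have hCne : Cc i j k ≠ 0 := by
    intro h0
    rw [h0, zero_smul] at hd
    simp at hd
  have hd2 : d ∈ (X k * pderiv j P).support := MvPolynomial.support_smul hd
  rw [support_X_mul] at hd2
  obtain ⟨d', hd', hdd⟩ := Finset.mem_map.mp hd2
  obtain ⟨e, he, hej, hde⟩ := support_pderiv_aux j P d' hd'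
  refine ⟨j, k, hCne, e, he, hej, ?_⟩
  have hdds : d = Finsupp.single k 1 + d' := hdd.symm
  subst hdds
  rw [add_assoc, hde]

lemma coadD_add {K : Type*} [Field K] {n : ℕ} (Cc : Fin n → Fin n → Fin n → K)
    (i : Fin n) (P Q : MvPolynomial (Fin n) K) :
    coadD Cc i (P + Q) = coadD Cc i P + coadD Cc i Q := by
  unfold coadD
  rw [← Finset.sum_add_distrib]
  refine Finset.sum_congr rfl fun j _ => ?_
  rw [← Finset.sum_add_distrib]
  refine Finset.sum_congr rfl fun k _ => ?_
  rw [map_add, mul_add, smul_add]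

lemma coadD_split {K : Type*} [Field K] {n : ℕ}
    (C1 C2 C3 : Fin n → Fin n → Fin n → K) (i : Fin n)
    (h : ∀ j k, C1 i j k = C2 i j k + C3 i j k) (P : MvPolynomial (Fin n) K) :
    coadD C1 i P = coadD C2 i P + coadD C3 i P := by
  unfold coadD
  rw [← Finset.sum_add_distrib]
  refine Finset.sum_congr rfl fun j _ => ?_
  rw [← Finset.sum_add_distrib]
  refine Finset.sum_congr rfl fun k _ => ?_
  rw [h j k, add_smul]

lemma coadD_congr {K : Type*} [Field K] {n : ℕ}
    (C1 C2 : Fin n → Fin n → Fin n → K) (i : Fin n)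
    (h : ∀ j k, C1 i j k = C2 i j k) (P : MvPolynomial (Fin n) K) :
    coadD C1 i P = coadD C2 i P := by
  unfold coadD
  refine Finset.sum_congr rfl fun j _ => Finset.sum_congr rfl fun k _ => ?_
  rw [h j k]

lemma coeff_bihomComp {K : Type*} [Field K] {n : ℕ} (s a b' : ℕ)
    (F : MvPolynomial (Fin n) K) (d : Fin n →₀ ℕ) :
    (bihomComp s a b' F).coeff d =
      if degS s d = a ∧ degM s d = b' then F.coeff d else 0 := by
  classical
  unfold bihomComp
  rw [MvPolynomial.coeff_sum]
  rw [Finset.sum_congr rfl fun e _ => MvPolynomial.coeff_monomial d e (F.coeff e)]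
  rw [Finset.sum_ite_eq' (F.support.filter fun d => degS s d = a ∧ degM s d = b') d
    (fun e => F.coeff e)]
  by_cases hd : d ∈ F.support
  · simp [Finset.mem_filter, hd]
  · have h0 : F.coeff d = 0 := MvPolynomial.notMem_support_iff.mp hd
    simp [Finset.mem_filter, hd, h0]

section StructureConstants
variable {K : Type*} [Field K] {L : Type*} [LieRing L] [LieAlgebra K L]
    {n : ℕ} (b : Module.Basis (Fin n) K L) (C : Fin n → Fin n → Fin n → K)
    (hC : ∀ i j, ⁅b i, b j⁆ = ∑ k, C i j k • b k)

include hC in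
lemma repr_bracket (i j k : Fin n) : b.repr ⁅b i, b j⁆ k = C i j k := by
  rw [hC i j, map_sum]
  rw [Finsupp.finset_sum_apply]
  rw [Finset.sum_congr rfl fun k' _ => by
    rw [map_smul, b.repr_self, Finsupp.smul_apply, Finsupp.single_apply, smul_eq_mul]]
  simp [Finset.sum_ite_eq']

include hC in
lemma C_antisymm (i j k : Fin n) : C j i k = - C i j k := by
  rw [← repr_bracket b C hC i j k, ← repr_bracket b C hC j i k, ← lie_skew (b i) (b j),
    map_neg, Finsupp.neg_apply, neg_neg]

include hC in
lemma C_vanish {T : Set (Fin n)} {i j : Fin n}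
    (hmem : ⁅b i, b j⁆ ∈ Submodule.span K (⇑b '' T)) {k : Fin n} (hk : k ∉ T) :
    C i j k = 0 := by
  rw [Module.Basis.mem_span_image] at hmem
  by_contra h0
  have hks : k ∈ (b.repr ⁅b i, b j⁆).support := by
    rw [Finsupp.mem_support_iff, repr_bracket b C hC]
    exact h0
  exact hk (hmem hks)

end StructureConstants

set_option maxHeartbeats 1000000 in
/-- Let `X_1, …, X_n` be a basis of a Lie algebra `L` adapted to a reduction
chain (`S = span(X_1, …, X_s)` a subalgebra, `M = span(X_{s+1}, …, X_n)` with `[S, M] ⊆ M`),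
and let `C'` be the structure constants of the associated Inönü–Wigner contraction.  If `F` is
a Casimir invariant of `L`, homogeneous of degree `p`, and `M*` is the largest `b` such that
the bihomogeneous component `F_{(p−b,b)}` is nonzero, then the top component `F_{(p−M*,M*)}` is
an invariant of the contraction: `D'_i F_{(p−M*,M*)} = 0` for all `i`. -/
theorem stmt6 {K : Type*} [Field K] {L : Type*} [LieRing L] [LieAlgebra K L]
    {n s : ℕ} (hsn : s ≤ n) (b : Module.Basis (Fin n) K L)
    (C : Fin n → Fin n → Fin n → K)
    (hC : ∀ i j, ⁅b i, b j⁆ = ∑ k, C i j k • b k)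
    (hSsub : ∀ x ∈ Submodule.span K (⇑b '' {i : Fin n | (i : ℕ) < s}),
        ∀ y ∈ Submodule.span K (⇑b '' {i : Fin n | (i : ℕ) < s}),
        ⁅x, y⁆ ∈ Submodule.span K (⇑b '' {i : Fin n | (i : ℕ) < s}))
    (hSM : ∀ x ∈ Submodule.span K (⇑b '' {i : Fin n | (i : ℕ) < s}),
        ∀ m ∈ Submodule.span K (⇑b '' {i : Fin n | s ≤ (i : ℕ)}),
        ⁅x, m⁆ ∈ Submodule.span K (⇑b '' {i : Fin n | s ≤ (i : ℕ)}))
    (C' : Fin n → Fin n → Fin n → K)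
    (hC' : ∀ i j k, C' i j k = if s ≤ (i : ℕ) ∧ s ≤ (j : ℕ) then 0 else C i j k)
    (F : MvPolynomial (Fin n) K) (p : ℕ)
    (hFhom : F.IsHomogeneous p)
    (hFcas : ∀ i : Fin n, coadD C i F = 0)
    (Mstar : ℕ)
    (hMne : bihomComp s (p - Mstar) Mstar F ≠ 0)
    (hMmax : ∀ q : ℕ, Mstar < q → bihomComp s (p - q) q F = 0) :
    ∀ i : Fin n, coadD C' i (bihomComp s (p - Mstar) Mstar F) = 0 := by
  classical
  -- membership of basis vectors in the spanned submodules
  have hbS : ∀ i : Fin n, (i : ℕ) < s →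
      b i ∈ Submodule.span K (⇑b '' {i : Fin n | (i : ℕ) < s}) :=
    fun i hi => Submodule.subset_span ⟨i, hi, rfl⟩
  have hbM : ∀ i : Fin n, s ≤ (i : ℕ) →
      b i ∈ Submodule.span K (⇑b '' {i : Fin n | s ≤ (i : ℕ)}) :=
    fun i hi => Submodule.subset_span ⟨i, hi, rfl⟩
  -- structure constant vanishing properties
  have hSS : ∀ i j k : Fin n, (i : ℕ) < s → (j : ℕ) < s → s ≤ (k : ℕ) → C i j k = 0 := by
    intro i j k hi hj hk
    exact C_vanish b C hC (hSsub _ (hbS i hi) _ (hbS j hj))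
      (by simp only [Set.mem_setOf_eq, not_lt]; exact hk)
  have hSMc : ∀ i j k : Fin n, (i : ℕ) < s → s ≤ (j : ℕ) → (k : ℕ) < s → C i j k = 0 := by
    intro i j k hi hj hk
    exact C_vanish b C hC (hSM _ (hbS i hi) _ (hbM j hj))
      (by simp only [Set.mem_setOf_eq, not_le]; exact hk)
  have hMS : ∀ i j k : Fin n, s ≤ (i : ℕ) → (j : ℕ) < s → (k : ℕ) < s → C i j k = 0 := by
    intro i j k hi hj hk
    rw [C_antisymm b C hC j i k, hSMc j i k hj hi hk, neg_zero]
  -- degrees of monomials of F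
  have hWF : ∀ d ∈ F.support, degS s d + degM s d = p := by
    intro d hd
    rw [degS_add_degM]
    exact hFhom (MvPolynomial.mem_support_iff.mp hd)
  set T := bihomComp s (p - Mstar) Mstar F with hTdef
  have hTcoeff : ∀ d, T.coeff d =
      if degS s d = p - Mstar ∧ degM s d = Mstar then F.coeff d else 0 :=
    fun d => coeff_bihomComp s (p - Mstar) Mstar F d
  have hTsup : ∀ d ∈ T.support, degM s d = Mstar := by
    intro d hd
    have hne := MvPolynomial.mem_support_iff.mp hd
    rw [hTcoeff d] at hne
    by_cases h : degS s d = p - Mstar ∧ degM s d = Mstar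
    · exact h.2
    · rw [if_neg h] at hne
      exact absurd rfl hne
  have hFsup : ∀ d ∈ F.support, degM s d ≤ Mstar := by
    intro d hd
    by_contra h
    push_neg at h
    have hdq : degS s d = p - degM s d := by
      have := hWF d hd; omega
    have h0 := hMmax (degM s d) h
    have hcc : (bihomComp s (p - degM s d) (degM s d) F).coeff d = F.coeff d := by
      rw [coeff_bihomComp, if_pos ⟨hdq, rfl⟩]
    rw [h0] at hcc
    exact (MvPolynomial.mem_support_iff.mp hd) (by simpa using hcc.symm)
  set R := F - T with hRdef
  have hFTR : F = T + R := by rw [hRdef]; ring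
  have hRsup : ∀ d ∈ R.support, degM s d < Mstar := by
    intro d hd
    have hne := MvPolynomial.mem_support_iff.mp hd
    have hcR : R.coeff d = F.coeff d - T.coeff d := by
      rw [hRdef, MvPolynomial.coeff_sub]
    by_contra h
    push_neg at h
    have hdF : d ∈ F.support := by
      by_contra hdF
      have h1 : F.coeff d = 0 := MvPolynomial.notMem_support_iff.mp hdF
      have h2 : T.coeff d = 0 := by rw [hTcoeff d, h1]; simp
      exact hne (by rw [hcR, h1, h2, sub_zero])
    have heq : degM s d = Mstar := le_antisymm (hFsup d hdF) h
    have hdS : degS s d = p - Mstar := by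
      have := hWF d hdF; omega
    exact hne (by rw [hcR, hTcoeff d, if_pos ⟨hdS, heq⟩, sub_self])
  have hwb : ∀ m : Fin n, degM s (Finsupp.single m 1) ≤ 1 := by
    intro m
    rw [degM_single]
    split <;> omega
  intro i
  by_cases hi : s ≤ (i : ℕ)
  · -- case `i ≥ s`
    set C2 : Fin n → Fin n → Fin n → K :=
      fun a j k => if s ≤ (j : ℕ) then C a j k else 0 with hC2
    have hsplit : ∀ j k, C i j k = C' i j k + C2 i j k := by
      intro j k
      rw [hC' i j k, hC2]
      by_cases hj : s ≤ (j : ℕ)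
      · simp [hj, hi]
      · simp [hj, hi]
    have h0 : coadD C' i T + (coadD C' i R + coadD C2 i F) = 0 := by
      have h1 : coadD C i F = coadD C' i F + coadD C2 i F := coadD_split C C' C2 i hsplit F
      have h2 : coadD C' i F = coadD C' i T + coadD C' i R := by
        conv_lhs => rw [hFTR]
        exact coadD_add C' i T R
      have h3 := hFcas i
      rw [h1, h2, add_assoc] at h3
      exact h3
    have hkey : ∀ j k : Fin n, C' i j k ≠ 0 → (j : ℕ) < s ∧ s ≤ (k : ℕ) := by
      intro j k hjk
      have hj : ¬ s ≤ (j : ℕ) := by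
        intro hj
        exact hjk (by rw [hC' i j k, if_pos ⟨hi, hj⟩])
      push_neg at hj
      refine ⟨hj, ?_⟩
      by_contra hk
      push_neg at hk
      have hz : C i j k = 0 := hMS i j k hi hj hk
      exact hjk (by rw [hC' i j k, if_neg (fun h => absurd h.2 (not_le.mpr hj)), hz])
    by_contra hne0
    obtain ⟨d, hd⟩ := Finset.nonempty_of_ne_empty
      (fun h => hne0 (MvPolynomial.support_eq_empty.mp h))
    obtain ⟨j, k, hjk, e, he, hej, heq⟩ := support_coadD C' i T d hd
    obtain ⟨hjs, hks⟩ := hkey j k hjk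
    have hdeg : degM s d + degM s (Finsupp.single j 1) =
        degM s (Finsupp.single k 1) + degM s e := by
      rw [← degM_add, ← degM_add, heq]
    rw [degM_single, degM_single, if_neg (not_le.mpr hjs), if_pos hks, hTsup e he] at hdeg
    -- so `degM s d = 1 + Mstar`
    have hRT : coadD C' i R + coadD C2 i F = - coadD C' i T :=
      eq_neg_of_add_eq_zero_right h0
    have hd2 : d ∈ (coadD C' i R).support ∪ (coadD C2 i F).support := by
      have hmem : d ∈ (coadD C' i R + coadD C2 i F).support := by
        rw [hRT, MvPolynomial.support_neg]
        exact hd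
      exact MvPolynomial.support_add hmem
    rcases Finset.mem_union.mp hd2 with hcase | hcase
    · obtain ⟨j', k', hjk', e', he', hej', heq'⟩ := support_coadD C' i R d hcase
      obtain ⟨hjs', hks'⟩ := hkey j' k' hjk'
      have hdeg' : degM s d + degM s (Finsupp.single j' 1) =
          degM s (Finsupp.single k' 1) + degM s e' := by
        rw [← degM_add, ← degM_add, heq']
      rw [degM_single, degM_single, if_neg (not_le.mpr hjs'), if_pos hks'] at hdeg'
      have := hRsup e' he'
      omega
    · obtain ⟨j', k', hjk', e', he', hej', heq'⟩ := support_coadD C2 i F d hcase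
      have hjs' : s ≤ (j' : ℕ) := by
        by_contra h'
        exact hjk' (by rw [hC2]; simp [h'])
      have hdeg' : degM s d + degM s (Finsupp.single j' 1) =
          degM s (Finsupp.single k' 1) + degM s e' := by
        rw [← degM_add, ← degM_add, heq']
      rw [degM_single (j := j'), if_pos hjs'] at hdeg'
      have hk1 := hwb k'
      have := hFsup e' he'
      omega
  · -- case `i < s`
    push_neg at hi
    have hCeq : ∀ j k, C' i j k = C i j k := fun j k => by
      rw [hC' i j k, if_neg (fun h => absurd h.1 (not_le.mpr hi))]
    rw [coadD_congr C' C i hCeq T]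
    have h0 : coadD C i T + coadD C i R = 0 := by
      have h2 : coadD C i F = coadD C i T + coadD C i R := by
        conv_lhs => rw [hFTR]
        exact coadD_add C i T R
      rw [← h2]
      exact hFcas i
    have hwjk : ∀ j k : Fin n, C i j k ≠ 0 →
        degM s (Finsupp.single j 1) = degM s (Finsupp.single k 1) := by
      intro j k hjk
      by_cases hj : s ≤ (j : ℕ)
      · have hk : s ≤ (k : ℕ) := by
          by_contra hk
          push_neg at hk
          exact hjk (hSMc i j k hi hj hk)
        rw [degM_single, degM_single, if_pos hj, if_pos hk]
      · push_neg at hj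
        have hk : (k : ℕ) < s := by
          by_contra hk
          push_neg at hk
          exact hjk (hSS i j k hi hj hk)
        rw [degM_single, degM_single, if_neg (not_le.mpr hj), if_neg (not_le.mpr hk)]
    by_contra hne0
    obtain ⟨d, hd⟩ := Finset.nonempty_of_ne_empty
      (fun h => hne0 (MvPolynomial.support_eq_empty.mp h))
    obtain ⟨j, k, hjk, e, he, hej, heq⟩ := support_coadD C i T d hd
    have hdeg : degM s d + degM s (Finsupp.single j 1) =
        degM s (Finsupp.single k 1) + degM s e := by
      rw [← degM_add, ← degM_add, heq]
    rw [hwjk j k hjk, hTsup e he] at hdeg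
    have hwk := hwb k
    -- `degM s d = Mstar`
    have hd2 : d ∈ (coadD C i R).support := by
      have hRT : coadD C i R = - coadD C i T := eq_neg_of_add_eq_zero_right h0
      rw [hRT, MvPolynomial.support_neg]
      exact hd
    obtain ⟨j', k', hjk', e', he', hej', heq'⟩ := support_coadD C i R d hd2
    have hdeg' : degM s d + degM s (Finsupp.single j' 1) =
        degM s (Finsupp.single k' 1) + degM s e' := by
      rw [← degM_add, ← degM_add, heq']
    rw [hwjk j' k' hjk'] at hdeg'
    have := hRsup e' he'
    have hwk' := hwb k'
    omega
end

section
/- Let g be the 15-dimensional complex Lie algebra su(4) in the Wigner supermultiplet basis {S_i, T_j, Q_{iα} : 1 ≤ i, j, α ≤ 3} with nonzero brackets [S_i, S_j] = iε_{ijk}S_k, [T_i, T_j] = iε_{ijk}T_k, [S_i, Q_{jα}] = iε_{ijk}Q_{kα}, [T_α, Q_{iβ}] = iε_{αβγ}Q_{iγ}, [Q_{iα}, Q_{jβ}] = (i/4)(δ_{αβ}ε_{ijk}S_k + δ_{ij}ε_{αβγ}T_γ), and [S_i, T_j] = 0. Then in the universal enveloping algebra U(g), the symmetrized Moshinsky–Nagel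 operator Ω := Sym(Σ_{i,α} S_iT_αQ_{iα}) commutes with every S_i and every T_α; i.e. Ω is a missing label operator for the reduction su(4) ⊃ su(2) × su(2). -/
/-- The Levi-Civita symbol `ε` on three indices, as a complex number. -/
noncomputable def eps3 (a b c : Fin 3) : ℂ :=
  ((((b.val : ℤ) - (a.val : ℤ)) * ((c.val : ℤ) - (b.val : ℤ))
      * ((c.val : ℤ) - (a.val : ℤ)) : ℤ) : ℂ) / 2

/-- The Kronecker delta, as a complex number. -/
noncomputable def kdelta (a b : Fin 3) : ℂ := if a = b then 1 else 0

/-- The symmetrization `Sym(abc) = (1/3!) Σ_{σ ∈ S_3} Y_{σ(1)}Y_{σ(2)}Y_{σ(3)}` of a cubic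
monomial in the universal enveloping algebra. -/
noncomputable def sym3 {g : Type*} [LieRing g] [LieAlgebra ℂ g] (a b c : g) :
    UniversalEnvelopingAlgebra ℂ g :=
  (6 : ℂ)⁻¹ • ∑ σ : Equiv.Perm (Fin 3),
    (List.ofFn fun i => UniversalEnvelopingAlgebra.ι ℂ (![a, b, c] (σ i))).prod

section
variable {g : Type*} [LieRing g] [LieAlgebra ℂ g]
local notation "ι" => UniversalEnvelopingAlgebra.ι ℂ
lemma univ_perm3 : (Finset.univ : Finset (Equiv.Perm (Fin 3))) =
    {(⟨![0,1,2],![0,1,2],by decide,by decide⟩ : Equiv.Perm (Fin 3)),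
     ⟨![0,2,1],![0,2,1],by decide,by decide⟩,
     ⟨![1,0,2],![1,0,2],by decide,by decide⟩,
     ⟨![1,2,0],![2,0,1],by decide,by decide⟩,
     ⟨![2,0,1],![1,2,0],by decide,by decide⟩,
     ⟨![2,1,0],![2,1,0],by decide,by decide⟩} := by decide
lemma sym3_eq (a b c : g) : sym3 a b c = (6:ℂ)⁻¹ •
    (ι a * (ι b * ι c) + ι a * (ι c * ι b) + ι b * (ι a * ι c)
      + ι b * (ι c * ι a) + ι c * (ι a * ι b) + ι c * (ι b * ι a)) := by
  rw [sym3, univ_perm3]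
  rw [Finset.sum_insert (by decide), Finset.sum_insert (by decide),
    Finset.sum_insert (by decide), Finset.sum_insert (by decide),
    Finset.sum_insert (by decide), Finset.sum_singleton]
  simp [List.ofFn_succ]
  abel

attribute [local instance] LieRing.ofAssociativeRing in
lemma iota_lie (x y : g) : ι ⁅x, y⁆ = ι x * ι y - ι y * ι x := by
  rw [LieHom.map_lie, Ring.lie_def]

lemma comm_sym3 (x a b c : g) :
    ι x * sym3 a b c - sym3 a b c * ι x
      = sym3 ⁅x, a⁆ b c + sym3 a ⁅x, b⁆ c + sym3 a b ⁅x, c⁆ := by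
  simp only [sym3_eq, iota_lie]
  rw [mul_smul_comm, smul_mul_assoc, ← smul_sub, ← smul_add, ← smul_add]
  congr 1
  noncomm_ring

lemma sym3_zero_left (b c : g) : sym3 (0 : g) b c = 0 := by
  simp [sym3_eq]

lemma sym3_zero_mid (a c : g) : sym3 a (0 : g) c = 0 := by
  simp [sym3_eq]

lemma sym3_sum_left (f : Fin 3 → ℂ) (u : Fin 3 → g) (b c : g) :
    sym3 (∑ k, f k • u k) b c = ∑ k, f k • sym3 (u k) b c := by
  simp only [sym3_eq, Fin.sum_univ_three, map_add, map_smul, add_mul, mul_add,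
    smul_mul_assoc, mul_smul_comm, smul_add]
  module

lemma sym3_sum_mid (f : Fin 3 → ℂ) (u : Fin 3 → g) (a c : g) :
    sym3 a (∑ k, f k • u k) c = ∑ k, f k • sym3 a (u k) c := by
  simp only [sym3_eq, Fin.sum_univ_three, map_add, map_smul, add_mul, mul_add,
    smul_mul_assoc, mul_smul_comm, smul_add]
  module

lemma sym3_sum_right (f : Fin 3 → ℂ) (u : Fin 3 → g) (a b : g) :
    sym3 a b (∑ k, f k • u k) = ∑ k, f k • sym3 a b (u k) := by
  simp only [sym3_eq, Fin.sum_univ_three, map_add, map_smul, add_mul, mul_add,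
    smul_mul_assoc, mul_smul_comm, smul_add]
  module

lemma eps3_swap23 (a b c : Fin 3) : eps3 a c b = -eps3 a b c := by
  simp only [eps3]
  push_cast
  ring

lemma key_cancel (i : Fin 3) (A : Fin 3 → Fin 3 → UniversalEnvelopingAlgebra ℂ g) :
    (∑ j, ∑ k, (Complex.I * eps3 i j k) • A k j)
      + ∑ j, ∑ k, (Complex.I * eps3 i j k) • A j k = 0 := by
  have h : (∑ j, ∑ k, (Complex.I * eps3 i j k) • A k j)
      = ∑ j, ∑ k, (-(Complex.I * eps3 i j k)) • A j k := by
    rw [Finset.sum_comm]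
    refine Finset.sum_congr rfl fun j _ => Finset.sum_congr rfl fun k _ => ?_
    rw [eps3_swap23 i j k]
    ring_nf
  rw [h, ← Finset.sum_add_distrib]
  simp [← Finset.sum_add_distrib, ← add_smul]

theorem stmt13' (S T : Fin 3 → g) (Q : Fin 3 → Fin 3 → g)
    (hSS : ∀ i j, ⁅S i, S j⁆ = ∑ k, (Complex.I * eps3 i j k) • S k)
    (hTT : ∀ i j, ⁅T i, T j⁆ = ∑ k, (Complex.I * eps3 i j k) • T k)
    (hST : ∀ i j, ⁅S i, T j⁆ = 0)
    (hSQ : ∀ i j α, ⁅S i, Q j α⁆ = ∑ k, (Complex.I * eps3 i j k) • Q k α)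
    (hTQ : ∀ α i β, ⁅T α, Q i β⁆ = ∑ γ, (Complex.I * eps3 α β γ) • Q i γ) :
    (∀ i, (∑ j, ∑ α, sym3 (S j) (T α) (Q j α)) * ι (S i)
        = ι (S i) * ∑ j, ∑ α, sym3 (S j) (T α) (Q j α)) ∧
    (∀ α, (∑ j, ∑ β, sym3 (S j) (T β) (Q j β)) * ι (T α)
        = ι (T α) * ∑ j, ∑ β, sym3 (S j) (T β) (Q j β)) := by
  constructor
  · intro i
    have H : ι (S i) * (∑ j, ∑ α, sym3 (S j) (T α) (Q j α))
        - (∑ j, ∑ α, sym3 (S j) (T α) (Q j α)) * ι (S i) = 0 := by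
      have e1 : ∀ j α, ι (S i) * sym3 (S j) (T α) (Q j α)
            - sym3 (S j) (T α) (Q j α) * ι (S i)
          = (∑ k, (Complex.I * eps3 i j k) • sym3 (S k) (T α) (Q j α))
            + ∑ k, (Complex.I * eps3 i j k) • sym3 (S j) (T α) (Q k α) := by
        intro j α
        rw [comm_sym3, hSS, hST, hSQ, sym3_sum_left, sym3_zero_mid, sym3_sum_right, add_zero]
      simp only [Finset.mul_sum, Finset.sum_mul]
      rw [← Finset.sum_sub_distrib]
      calc ∑ j, ((∑ α, ι (S i) * sym3 (S j) (T α) (Q j α))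
              - ∑ α, sym3 (S j) (T α) (Q j α) * ι (S i))
          = ∑ j, ∑ α, ((∑ k, (Complex.I * eps3 i j k) • sym3 (S k) (T α) (Q j α))
              + ∑ k, (Complex.I * eps3 i j k) • sym3 (S j) (T α) (Q k α)) := by
            refine Finset.sum_congr rfl fun j _ => ?_
            rw [← Finset.sum_sub_distrib]
            exact Finset.sum_congr rfl fun α _ => e1 j α
        _ = 0 := by
            rw [Finset.sum_comm]
            refine Finset.sum_eq_zero fun α _ => ?_
            rw [Finset.sum_add_distrib]
            exact key_cancel i (fun a b => sym3 (S a) (T α) (Q b α))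
    rw [← sub_eq_zero, ← neg_sub, H, neg_zero]
  · intro α
    have hTS : ∀ a j, ⁅T a, S j⁆ = 0 := by
      intro a j; rw [← lie_skew, hST, neg_zero]
    have H : ι (T α) * (∑ j, ∑ β, sym3 (S j) (T β) (Q j β))
        - (∑ j, ∑ β, sym3 (S j) (T β) (Q j β)) * ι (T α) = 0 := by
      have e1 : ∀ j β, ι (T α) * sym3 (S j) (T β) (Q j β)
            - sym3 (S j) (T β) (Q j β) * ι (T α)
          = (∑ γ, (Complex.I * eps3 α β γ) • sym3 (S j) (T γ) (Q j β))
            + ∑ γ, (Complex.I * eps3 α β γ) • sym3 (S j) (T β) (Q j γ) := by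
        intro j β
        rw [comm_sym3, hTS, hTT, hTQ, sym3_zero_left, sym3_sum_mid, sym3_sum_right, zero_add]
      simp only [Finset.mul_sum, Finset.sum_mul]
      rw [← Finset.sum_sub_distrib]
      calc ∑ j, ((∑ β, ι (T α) * sym3 (S j) (T β) (Q j β))
              - ∑ β, sym3 (S j) (T β) (Q j β) * ι (T α))
          = ∑ j, ∑ β, ((∑ γ, (Complex.I * eps3 α β γ) • sym3 (S j) (T γ) (Q j β))
              + ∑ γ, (Complex.I * eps3 α β γ) • sym3 (S j) (T β) (Q j γ)) := by
            refine Finset.sum_congr rfl fun j _ => ?_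
            rw [← Finset.sum_sub_distrib]
            exact Finset.sum_congr rfl fun β _ => e1 j β
        _ = 0 := by
            refine Finset.sum_eq_zero fun j _ => ?_
            rw [Finset.sum_add_distrib]
            exact key_cancel α (fun b c => sym3 (S j) (T b) (Q j c))
    rw [← sub_eq_zero, ← neg_sub, H, neg_zero]
end

/-- In `su(4)` in the Wigner supermultiplet basis `{S_i, T_j, Q_{iα}}`, the
symmetrized Moshinsky–Nagel operator `Ω = Sym(Σ S_iT_αQ_{iα})` commutes with every `S_i` and
every `T_α` in the universal enveloping algebra: it is a missing label operator for the
reduction `su(4) ⊃ su(2) × su(2)`. -/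
theorem stmt13 {g : Type*} [LieRing g] [LieAlgebra ℂ g]
    (S T : Fin 3 → g) (Q : Fin 3 → Fin 3 → g)
    (hSS : ∀ i j, ⁅S i, S j⁆ = ∑ k, (Complex.I * eps3 i j k) • S k)
    (hTT : ∀ i j, ⁅T i, T j⁆ = ∑ k, (Complex.I * eps3 i j k) • T k)
    (hST : ∀ i j, ⁅S i, T j⁆ = 0)
    (hSQ : ∀ i j α, ⁅S i, Q j α⁆ = ∑ k, (Complex.I * eps3 i j k) • Q k α)
    (hTQ : ∀ α i β, ⁅T α, Q i β⁆ = ∑ γ, (Complex.I * eps3 α β γ) • Q i γ)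
    (hQQ : ∀ i α j β, ⁅Q i α, Q j β⁆ =
      (∑ k, (Complex.I / 4 * kdelta α β * eps3 i j k) • S k)
        + ∑ γ, (Complex.I / 4 * kdelta i j * eps3 α β γ) • T γ) :
    (∀ i, (∑ j, ∑ α, sym3 (S j) (T α) (Q j α)) * UniversalEnvelopingAlgebra.ι ℂ (S i)
        = UniversalEnvelopingAlgebra.ι ℂ (S i) * ∑ j, ∑ α, sym3 (S j) (T α) (Q j α)) ∧
    (∀ α, (∑ j, ∑ β, sym3 (S j) (T β) (Q j β)) * UniversalEnvelopingAlgebra.ι ℂ (T α)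
        = UniversalEnvelopingAlgebra.ι ℂ (T α) * ∑ j, ∑ β, sym3 (S j) (T β) (Q j β)) := by
  exact stmt13' S T Q hSS hTT hST hSQ hTQ
end
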